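/- Let λ and β be positive random variables on a probability space (Ω, 𝓕, ℙ) satisfying 𝔼[(β/λ^{1/β}) ((β+1)/β)^{(β+1)/β}] < ∞, 𝔼[λ] < ∞ and 𝔼[λβ] < ∞. If ℙ(β = 1) > 0 and ℙ(β < 1) = 0, then the mixed Kies density f(t) = 𝔼[h(t; λ, β)] tends, as t → 0+, to 𝔼[λ · 1_{β = 1}] (equivalently, to ℚ(β = 1)·𝔼[λ], where ℚ is the probability measure with Radon–Nikodym derivative dℚ/dℙ = λ/𝔼[λ]). -/

import Mathlib

open MeasureTheory Filter Set

theorem mixed_kies_density_left_endpoint_beta_eq_one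
    {Ω : Type*} [MeasurableSpace Ω] (μ : Measure Ω) [IsProbabilityMeasure μ]
    (lam beta : Ω → ℝ) (hlam_meas : Measurable lam) (hbeta_meas : Measurable beta)
    (hlam_pos : ∀ ω, 0 < lam ω) (hbeta_pos : ∀ ω, 0 < beta ω)
    (hcond1 : Integrable (fun ω =>
        beta ω / lam ω ^ (1 / beta ω) *
          ((beta ω + 1) / beta ω) ^ ((beta ω + 1) / beta ω)) μ)
    (hcond2 : Integrable lam μ)
    (hcond3 : Integrable (fun ω => lam ω * beta ω) μ)
    (hbeta_eq : 0 < μ {ω | beta ω = 1})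
    (hbeta_lt : μ {ω | beta ω < 1} = 0)
    (f : ℝ → ℝ)
    (hf : ∀ t, f t = ∫ ω, lam ω * beta ω * t ^ (beta ω - 1) * (1 - t) ^ (-(beta ω + 1)) *
        Real.exp (-(lam ω) * (t / (1 - t)) ^ (beta ω)) ∂μ) :
    Tendsto f (nhdsWithin 0 (Set.Ioi 0)) (nhds (∫ ω in {ω | beta ω = 1}, lam ω ∂μ)) := by
  have hS : MeasurableSet {ω | beta ω = 1} := hbeta_meas (measurableSet_singleton 1)
  have hae : ∀ᵐ ω ∂μ, 1 ≤ beta ω := by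
    rw [ae_iff]
    convert hbeta_lt using 2
    ext ω; simp [not_le]
  have key : Tendsto (fun t : ℝ => ∫ ω, lam ω * beta ω * t ^ (beta ω - 1) *
        (1 - t) ^ (-(beta ω + 1)) *
        Real.exp (-(lam ω) * (t / (1 - t)) ^ (beta ω)) ∂μ) (nhdsWithin 0 (Set.Ioi 0))
      (nhds (∫ ω, ({ω | beta ω = 1}).indicator lam ω ∂μ)) := by
    apply tendsto_integral_filter_of_dominated_convergence (fun ω => 4 * (lam ω * beta ω))
    · filter_upwards [Ioc_mem_nhdsGT_of_mem
        (by norm_num : (0:ℝ) ∈ Set.Ico 0 (1/2:ℝ))] with t ht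
      have ht0 : 0 < t := ht.1
      have h1t : (0:ℝ) < 1 - t := by linarith [ht.2]
      have hq : (0:ℝ) < t / (1 - t) := by positivity
      have m1 : Measurable fun ω => t ^ (beta ω - 1) := by
        simp_rw [Real.rpow_def_of_pos ht0]
        exact ((hbeta_meas.sub measurable_const).const_mul _).exp
      have m2 : Measurable fun ω => (1 - t) ^ (-(beta ω + 1)) := by
        simp_rw [Real.rpow_def_of_pos h1t]
        exact (((hbeta_meas.add measurable_const).neg).const_mul _).exp
      have m3 : Measurable fun ω => (t / (1 - t)) ^ (beta ω) := by
        simp_rw [Real.rpow_def_of_pos hq]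
        exact (hbeta_meas.const_mul _).exp
      exact ((((hlam_meas.mul hbeta_meas).mul m1).mul m2).mul
          ((hlam_meas.neg.mul m3).exp)).aestronglyMeasurable
    · filter_upwards [Ioc_mem_nhdsGT_of_mem
        (by norm_num : (0:ℝ) ∈ Set.Ico 0 (1/2:ℝ))] with t ht
      filter_upwards [hae] with ω hb
      have ht0 : 0 < t := ht.1
      have ht1 : t ≤ 1/2 := ht.2
      have h1t : (0:ℝ) < 1 - t := by linarith
      have hlb := hlam_pos ω
      have hbb := hbeta_pos ω
      have hF_nonneg : 0 ≤ lam ω * beta ω * t ^ (beta ω - 1) * (1 - t) ^ (-(beta ω + 1)) *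
          Real.exp (-(lam ω) * (t / (1 - t)) ^ (beta ω)) := by positivity
      rw [Real.norm_of_nonneg hF_nonneg]
      have hexp : Real.exp (-(lam ω) * (t / (1 - t)) ^ (beta ω)) ≤ 1 := by
        rw [Real.exp_le_one_iff]
        have : 0 ≤ (t / (1 - t)) ^ (beta ω) := Real.rpow_nonneg (by positivity) _
        nlinarith
      have h2 : t ^ (beta ω - 1) ≤ (1 - t) ^ (beta ω - 1) :=
        Real.rpow_le_rpow ht0.le (by linarith) (by linarith)
      have h3 : (1 - t) ^ (beta ω - 1) * (1 - t) ^ (-(beta ω + 1)) = (1 - t) ^ (-(2:ℝ)) := by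
        rw [← Real.rpow_add h1t]; ring_nf
      have h4 : (1 - t) ^ (-(2:ℝ)) ≤ 4 := by
        calc (1 - t) ^ (-(2:ℝ)) ≤ (1/2 : ℝ) ^ (-(2:ℝ)) :=
              Real.rpow_le_rpow_of_nonpos (by norm_num) (by linarith) (by norm_num)
          _ = 4 := by
              rw [show (-(2:ℝ)) = ((-2 : ℤ) : ℝ) by norm_num, Real.rpow_intCast]; norm_num
      calc lam ω * beta ω * t ^ (beta ω - 1) * (1 - t) ^ (-(beta ω + 1)) *
            Real.exp (-(lam ω) * (t / (1 - t)) ^ (beta ω))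
          ≤ lam ω * beta ω * ((1 - t) ^ (beta ω - 1)) * (1 - t) ^ (-(beta ω + 1)) * 1 := by
            gcongr
        _ = lam ω * beta ω * ((1 - t) ^ (beta ω - 1) * (1 - t) ^ (-(beta ω + 1))) := by ring
        _ = lam ω * beta ω * (1 - t) ^ (-(2:ℝ)) := by rw [h3]
        _ ≤ lam ω * beta ω * 4 := by
            have : 0 ≤ lam ω * beta ω := by positivity
            nlinarith
        _ = 4 * (lam ω * beta ω) := by ring
    · exact hcond3.const_mul 4
    · filter_upwards [hae] with ω hb
      have hbω := hbeta_pos ω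
      have hlω := hlam_pos ω
      have hcont : ContinuousAt (fun t : ℝ => lam ω * beta ω * t ^ (beta ω - 1) *
          (1 - t) ^ (-(beta ω + 1)) * Real.exp (-(lam ω) * (t / (1 - t)) ^ (beta ω))) 0 := by
        refine ContinuousAt.mul (ContinuousAt.mul (ContinuousAt.mul continuousAt_const ?_) ?_) ?_
        · exact continuousAt_id.rpow_const (Or.inr (by linarith))
        · exact (continuousAt_const.sub continuousAt_id).rpow_const (Or.inl (by norm_num))
        · exact (continuousAt_const.mul
            ((continuousAt_id.div (continuousAt_const.sub continuousAt_id)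
              (show (1:ℝ) - 0 ≠ 0 by norm_num)).rpow_const (Or.inr hbω.le))).rexp
      have htend := hcont.tendsto.mono_left (nhdsWithin_le_nhds (s := Set.Ioi (0:ℝ)))
      rcases eq_or_lt_of_le hb with hb1 | hb1
      · have hmem : ω ∈ {ω | beta ω = 1} := hb1.symm
        rw [Set.indicator_of_mem hmem]
        convert htend using 2
        simp [← hb1, Real.rpow_one, Real.one_rpow, Real.rpow_zero]
      · have hmem : ω ∉ {ω | beta ω = 1} := by
          simp only [Set.mem_setOf_eq]; linarith
        rw [Set.indicator_of_notMem hmem]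
        convert htend using 2
        simp [Real.zero_rpow (by linarith : beta ω - 1 ≠ 0), Real.one_rpow,
          Real.zero_rpow (ne_of_gt hbω)]
  rw [funext hf, ← integral_indicator hS]
  exact key
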